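/- Square summability of PAM iterate gaps (part 2 of the convergence theorem for the Laplace–Beltrami basis pursuit algorithm): Let X and Y be real normed vector spaces, W ⊆ X and S ⊆ Y sets, E : X × Y → ℝ a function, and η > 0. Suppose (w_j)_{j≥0} in W and (Ψ_j)_{j≥0} in S satisfy: for every j ≥ 0, Ψ_{j+1} ∈ S minimizes Ψ ↦ E(w_j, Ψ) + (1/(2η))‖Ψ − Ψ_j‖² over S, and w_{j+1} ∈ W minimizes w ↦ E(w, Ψ_{j+1}) + (1/(2η))‖w − w_j‖² over W. If moreover there exists m ∈ ℝ with E(w, Ψ) ≥ m for all w ∈ W and Ψ ∈ S, then the series Σ_{j≥0} (‖w_{j+1} − w_j‖² + ‖Ψ_{j+1} − Ψ_j‖²) converges (the sequence of summands is summable). -/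
import Mathlib


/-- Square summability of PAM iterate gaps. -/
theorem pam_square_summable
    {X Y : Type*} [NormedAddCommGroup X] [NormedSpace ℝ X]
    [NormedAddCommGroup Y] [NormedSpace ℝ Y]
    (W : Set X) (S : Set Y) (E : X × Y → ℝ) (η : ℝ) (hη : 0 < η)
    (w : ℕ → X) (Ψ : ℕ → Y)
    (hwW : ∀ j, w j ∈ W) (hΨS : ∀ j, Ψ j ∈ S)
    (hΨmin : ∀ j, ∀ ψ ∈ S,
      E (w j, Ψ (j + 1)) + (1 / (2 * η)) * ‖Ψ (j + 1) - Ψ j‖ ^ 2 ≤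
        E (w j, ψ) + (1 / (2 * η)) * ‖ψ - Ψ j‖ ^ 2)
    (hwmin : ∀ j, ∀ u ∈ W,
      E (w (j + 1), Ψ (j + 1)) + (1 / (2 * η)) * ‖w (j + 1) - w j‖ ^ 2 ≤
        E (u, Ψ (j + 1)) + (1 / (2 * η)) * ‖u - w j‖ ^ 2)
    (m : ℝ) (hbound : ∀ u ∈ W, ∀ ψ ∈ S, m ≤ E (u, ψ)) :
    Summable (fun j : ℕ => ‖w (j + 1) - w j‖ ^ 2 + ‖Ψ (j + 1) - Ψ j‖ ^ 2) := by
  set c : ℝ := 1 / (2 * η) with hc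
  have hcpos : 0 < c := by positivity
  have key : ∀ j, c * (‖w (j + 1) - w j‖ ^ 2 + ‖Ψ (j + 1) - Ψ j‖ ^ 2) ≤
      E (w j, Ψ j) - E (w (j + 1), Ψ (j + 1)) := by
    intro j
    have h1 := hΨmin j (Ψ j) (hΨS j)
    have h2 := hwmin j (w j) (hwW j)
    simp only [sub_self, norm_zero] at h1 h2
    nlinarith [h1, h2]
  have hnn : ∀ j : ℕ, 0 ≤ ‖w (j + 1) - w j‖ ^ 2 + ‖Ψ (j + 1) - Ψ j‖ ^ 2 := by
    intro j; positivity
  have hsum : ∀ n : ℕ, ∑ j ∈ Finset.range n,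
      (‖w (j + 1) - w j‖ ^ 2 + ‖Ψ (j + 1) - Ψ j‖ ^ 2) ≤ (E (w 0, Ψ 0) - m) / c := by
    intro n
    have tele : ∑ j ∈ Finset.range n,
        (E (w j, Ψ j) - E (w (j + 1), Ψ (j + 1))) = E (w 0, Ψ 0) - E (w n, Ψ n) := by
      induction n with
      | zero => simp
      | succ k ih => rw [Finset.sum_range_succ, ih]; ring
    have hle : c * ∑ j ∈ Finset.range n,
        (‖w (j + 1) - w j‖ ^ 2 + ‖Ψ (j + 1) - Ψ j‖ ^ 2) ≤ E (w 0, Ψ 0) - E (w n, Ψ n) := by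
      rw [Finset.mul_sum, ← tele]
      exact Finset.sum_le_sum fun j _ => key j
    have hm := hbound (w n) (hwW n) (Ψ n) (hΨS n)
    rw [← le_div_iff₀' hcpos] at hle
    refine hle.trans ?_
    gcongr
  exact summable_of_sum_range_le hnn hsum
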